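/- Let L, Q > 0 and define F(x) = (3/8)L x² + (L³/(64Q²)) φ(4Q x / L) where φ(x) = ∫₀ˣ log(cosh s) ds. Then F''(x) = (3/4)L + (1/4)L tanh(4Qx/L) ∈ [L/2, L] for all x ∈ ℝ, and F'''(x) = Q sech²(4Qx/L) ∈ [0, Q] with F'''(0) = Q and F'''(x) ≥ Q/2 for all x ∈ [−L/(8Q), L/(8Q)]. -/

import Mathlib

/-- `φ(x) = ∫₀ˣ log(cosh s) ds`. -/
noncomputable def phi (x : ℝ) : ℝ := ∫ s in (0 : ℝ)..x, Real.log (Real.cosh s)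

/-- The lower-bound instance `F(x) = (3/8)Lx² + (L³/(64Q²))·φ(4Qx/L)`. -/
noncomputable def Finst (L Q x : ℝ) : ℝ :=
  3 / 8 * L * x ^ 2 + L ^ 3 / (64 * Q ^ 2) * phi (4 * Q * x / L)

lemma hasDerivAt_phi (x : ℝ) : HasDerivAt phi (Real.log (Real.cosh x)) x :=
  ((Real.continuous_cosh.log (fun s => (Real.cosh_pos s).ne')).integral_hasStrictDerivAt
    0 x).hasDerivAt

lemma hasDerivAt_logcosh (y : ℝ) :
    HasDerivAt (fun y => Real.log (Real.cosh y)) (Real.tanh y) y := by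
  have := (Real.hasDerivAt_cosh y).log (Real.cosh_pos y).ne'
  simpa [Real.tanh_eq_sinh_div_cosh] using this

lemma hasDerivAt_tanh (y : ℝ) :
    HasDerivAt Real.tanh (1 / Real.cosh y ^ 2) y := by
  have h := (Real.hasDerivAt_sinh y).div (Real.hasDerivAt_cosh y) (Real.cosh_pos y).ne'
  have hc : Real.cosh y * Real.cosh y - Real.sinh y * Real.sinh y = 1 := by
    nlinarith [Real.cosh_sq_sub_sinh_sq y]
  have heq : (fun y => Real.sinh y / Real.cosh y) = Real.tanh := by
    funext t; rw [Real.tanh_eq_sinh_div_cosh]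
  rw [show (Real.sinh / Real.cosh) = Real.tanh from heq] at h
  refine h.congr_deriv ?_
  rw [hc]

lemma tanh_mem (y : ℝ) : Real.tanh y ∈ Set.Icc (-1:ℝ) 1 := by
  have hc := Real.cosh_pos y
  have h1 : Real.sinh y < Real.cosh y := Real.sinh_lt_cosh y
  have h2 : -Real.cosh y < Real.sinh y := by
    nlinarith [Real.cosh_eq y, Real.sinh_eq y, Real.exp_pos (-y), Real.exp_pos y]
  rw [Real.tanh_eq_sinh_div_cosh]
  constructor
  · rw [le_div_iff₀ hc]; nlinarith
  · rw [div_le_one hc]; linarith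

/-- For `L, Q > 0` and `F = Finst L Q`:
`F''(x) = (3/4)L + (1/4)L·tanh(4Qx/L) ∈ [L/2, L]` for all `x`, and
`F'''(x) = Q·sech²(4Qx/L) ∈ [0, Q]` with `F'''(0) = Q` and `F'''(x) ≥ Q/2`
on `[−L/(8Q), L/(8Q)]`. -/
theorem stmt_11 (L Q : ℝ) (hL : 0 < L) (hQ : 0 < Q) :
    (∀ x, deriv (deriv (Finst L Q)) x =
      3 / 4 * L + 1 / 4 * L * Real.tanh (4 * Q * x / L)) ∧
    (∀ x, deriv (deriv (Finst L Q)) x ∈ Set.Icc (L / 2) L) ∧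
    (∀ x, deriv (deriv (deriv (Finst L Q))) x =
      Q * (1 / Real.cosh (4 * Q * x / L) ^ 2)) ∧
    (∀ x, deriv (deriv (deriv (Finst L Q))) x ∈ Set.Icc 0 Q) ∧
    deriv (deriv (deriv (Finst L Q))) 0 = Q ∧
    (∀ x ∈ Set.Icc (-(L / (8 * Q))) (L / (8 * Q)),
      Q / 2 ≤ deriv (deriv (deriv (Finst L Q))) x) := by
  have hL0 := hL.ne'
  have hQ0 := hQ.ne'
  have hinner : ∀ x : ℝ, HasDerivAt (fun x : ℝ => 4 * Q * x / L) (4 * Q / L) x := by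
    intro x
    simpa using (((hasDerivAt_id x).const_mul (4 * Q)).div_const L)
  -- first derivative
  have hF1 : ∀ x, HasDerivAt (Finst L Q)
      (3 / 4 * L * x + L ^ 2 / (16 * Q) * Real.log (Real.cosh (4 * Q * x / L))) x := by
    intro x
    have h1 : HasDerivAt (fun x : ℝ => 3 / 8 * L * x ^ 2) (3 / 4 * L * x) x := by
      have h := (hasDerivAt_pow 2 x).const_mul (3 / 8 * L)
      refine h.congr_deriv ?_
      push_cast
      ring
    have h2 : HasDerivAt (fun x : ℝ => phi (4 * Q * x / L))
        (Real.log (Real.cosh (4 * Q * x / L)) * (4 * Q / L)) x :=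
      (hasDerivAt_phi _).comp x (hinner x)
    have := h1.add (h2.const_mul (L ^ 3 / (64 * Q ^ 2)))
    refine this.congr_deriv ?_
    field_simp
    ring
  have hdF : deriv (Finst L Q) = fun x =>
      3 / 4 * L * x + L ^ 2 / (16 * Q) * Real.log (Real.cosh (4 * Q * x / L)) :=
    funext fun x => (hF1 x).deriv
  -- second derivative
  have hF2 : ∀ x, HasDerivAt (deriv (Finst L Q))
      (3 / 4 * L + 1 / 4 * L * Real.tanh (4 * Q * x / L)) x := by
    intro x
    rw [hdF]
    have h1 : HasDerivAt (fun x : ℝ => 3 / 4 * L * x) (3 / 4 * L) x := by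
      simpa using (hasDerivAt_id x).const_mul (3 / 4 * L)
    have h2 : HasDerivAt (fun x : ℝ => Real.log (Real.cosh (4 * Q * x / L)))
        (Real.tanh (4 * Q * x / L) * (4 * Q / L)) x :=
      (hasDerivAt_logcosh _).comp x (hinner x)
    have := h1.add (h2.const_mul (L ^ 2 / (16 * Q)))
    refine this.congr_deriv ?_
    field_simp
    ring
  have hddF : deriv (deriv (Finst L Q)) = fun x =>
      3 / 4 * L + 1 / 4 * L * Real.tanh (4 * Q * x / L) :=
    funext fun x => (hF2 x).deriv
  -- third derivative
  have hF3 : ∀ x, HasDerivAt (deriv (deriv (Finst L Q)))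
      (Q * (1 / Real.cosh (4 * Q * x / L) ^ 2)) x := by
    intro x
    rw [hddF]
    have h2 : HasDerivAt (fun x : ℝ => Real.tanh (4 * Q * x / L))
        ((1 / Real.cosh (4 * Q * x / L) ^ 2) * (4 * Q / L)) x :=
      (hasDerivAt_tanh _).comp x (hinner x)
    have := (h2.const_mul (1 / 4 * L)).const_add (3 / 4 * L)
    refine this.congr_deriv ?_
    have hcp : (Real.cosh (4 * Q * x / L)) ^ 2 ≠ 0 :=
      (pow_pos (Real.cosh_pos _) 2).ne'
    field_simp
  have hdddF : deriv (deriv (deriv (Finst L Q))) = fun x =>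
      Q * (1 / Real.cosh (4 * Q * x / L) ^ 2) :=
    funext fun x => (hF3 x).deriv
  refine ⟨fun x => by rw [hddF], ?_, fun x => by rw [hdddF], ?_, ?_, ?_⟩
  · intro x
    rw [hddF]
    obtain ⟨h1, h2⟩ := tanh_mem (4 * Q * x / L)
    constructor <;> nlinarith
  · intro x
    rw [hdddF]
    have h1 : (1:ℝ) ≤ Real.cosh (4 * Q * x / L) := Real.one_le_cosh _
    have h2 : (1:ℝ) ≤ Real.cosh (4 * Q * x / L) ^ 2 := by nlinarith
    constructor
    · positivity
    · calc Q * (1 / Real.cosh (4 * Q * x / L) ^ 2) ≤ Q * 1 := by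
            apply mul_le_mul_of_nonneg_left _ hQ.le
            rw [div_le_one (by positivity)]; exact h2
        _ = Q := mul_one Q
  · rw [hdddF]; simp
  · intro x hx
    rw [hdddF]
    obtain ⟨hx1, hx2⟩ := hx
    have key : Q * (L / (8 * Q)) = L / 8 := by field_simp
    have hy : |4 * Q * x / L| ≤ 1 / 2 := by
      rw [abs_le, le_div_iff₀ hL, div_le_iff₀ hL]
      have h4Q : (0:ℝ) ≤ 4 * Q := by positivity
      constructor
      · nlinarith [mul_le_mul_of_nonneg_left hx1 h4Q]
      · nlinarith [mul_le_mul_of_nonneg_left hx2 h4Q]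
    set y := 4 * Q * x / L with hy_def
    have hcy : Real.cosh y ≤ Real.cosh (1 / 2) := by
      rw [Real.cosh_le_cosh]
      calc |y| ≤ 1 / 2 := hy
        _ = |(1:ℝ)/2| := by rw [abs_of_pos]; norm_num
    have hch : Real.cosh (1 / 2 : ℝ) ^ 2 ≤ 2 := by
      rw [Real.cosh_eq]
      have he : Real.exp (1/2 : ℝ) * Real.exp (1/2 : ℝ) = Real.exp 1 := by
        rw [← Real.exp_add]; norm_num
      have he' : Real.exp (-(1/2) : ℝ) * Real.exp (-(1/2) : ℝ) = Real.exp (-1) := by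
        rw [← Real.exp_add]; norm_num
      have h1 : Real.exp (1:ℝ) < 3 := by
        have := Real.exp_one_lt_d9; linarith
      have h2 : Real.exp (-1:ℝ) < 1 := Real.exp_lt_one_iff.2 (by norm_num)
      have h3 : Real.exp ((1:ℝ)/2) * Real.exp (-(1/2):ℝ) = 1 := by
        rw [← Real.exp_add]; norm_num
      nlinarith [Real.exp_pos (1/2:ℝ), Real.exp_pos (-(1/2):ℝ)]
    have hcy2 : Real.cosh y ^ 2 ≤ 2 := by
      have h0 : 0 ≤ Real.cosh y := (Real.cosh_pos y).le
      nlinarith [Real.cosh_pos (1/2 : ℝ)]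
    have hcpos : (0:ℝ) < Real.cosh y ^ 2 := pow_pos (Real.cosh_pos y) 2
    show Q / 2 ≤ Q * (1 / Real.cosh y ^ 2)
    have hQ2 : Q / 2 = Q * (1 / 2) := by ring
    rw [hQ2]
    exact mul_le_mul_of_nonneg_left
      (div_le_div_of_nonneg_left (by norm_num) hcpos hcy2) hQ.le
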